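/- For A = HT^{ℓ−1} and B = T^{ℓ−1}H (ℓ ≥ 2) in a fair coin sequence, the net score satisfies Ŝ_n = 1{ξ_n = T-run of length ≥ ℓ−1 in progress} − 1{run at start}, and in particular Ŝ_n ∈ {−1, 0, 1} deterministically for all n; for the case ℓ = 2 (A = HT, B = TH), Ŝ_n = 1{ξ_n = T} − 1{ξ_1 = T}. -/

import Mathlib

/-- The net score `Ŝ_n` of Litt's game for `A = H T^{ℓ-1}` and `B = T^{ℓ-1} H` on the coin
sequence `ξ_1, ξ_2, …` (with `H = false`, `T = true`): the number of occurrences of `A` in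
`ξ_1 ⋯ ξ_n` minus the number of occurrences of `B`. -/
def netScore (ℓ : ℕ) (ξ : ℕ → Bool) (n : ℕ) : ℤ :=
  (∑ k ∈ Finset.Icc 1 (n + 1 - ℓ),
      if ∀ i : Fin ℓ, ξ (k + i) = decide ((i : ℕ) ≠ 0) then (1 : ℤ) else 0) -
  ∑ k ∈ Finset.Icc 1 (n + 1 - ℓ),
      if ∀ i : Fin ℓ, ξ (k + i) = decide ((i : ℕ) ≠ ℓ - 1) then (1 : ℤ) else 0

/-- Indicator that `ξ_k, …, ξ_{k+ℓ-2}` are all `T`. -/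
def uu (ℓ : ℕ) (ξ : ℕ → Bool) (k : ℕ) : ℤ :=
  if ∀ j : Fin (ℓ - 1), ξ (k + j) = true then 1 else 0

lemma uu_mem (ℓ : ℕ) (ξ : ℕ → Bool) (k : ℕ) : uu ℓ ξ k = 0 ∨ uu ℓ ξ k = 1 := by
  unfold uu; split <;> simp

lemma term_eq (ℓ : ℕ) (hℓ : 2 ≤ ℓ) (ξ : ℕ → Bool) (k : ℕ) :
    ((if ∀ i : Fin ℓ, ξ (k + i) = decide ((i : ℕ) ≠ 0) then (1 : ℤ) else 0) -
      if ∀ i : Fin ℓ, ξ (k + i) = decide ((i : ℕ) ≠ ℓ - 1) then (1 : ℤ) else 0)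
    = uu ℓ ξ (k + 1) - uu ℓ ξ k := by
  have hP : (∀ i : Fin ℓ, ξ (k + i) = decide ((i : ℕ) ≠ 0)) ↔
      ((∀ j : Fin (ℓ - 1), ξ (k + 1 + j) = true) ∧
        ¬ (∀ j : Fin (ℓ - 1), ξ (k + j) = true)) := by
    constructor
    · intro h
      constructor
      · intro j
        have := h ⟨(j : ℕ) + 1, by omega⟩
        simp only [decide_eq_true_eq] at this
        have e : k + 1 + (j : ℕ) = k + ((j : ℕ) + 1) := by omega
        rw [e]
        rw [this]
        simp
      · intro ha
        have h0 := h ⟨0, by omega⟩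
        have ha0 := ha ⟨0, by omega⟩
        simp only [decide_eq_true_eq] at h0 ha0
        simp only [Nat.add_zero] at h0 ha0
        rw [ha0] at h0
        simp at h0
    · rintro ⟨hb, ha⟩ i
      rcases Nat.eq_zero_or_pos (i : ℕ) with h0 | hpos
      · simp only [h0]
        simp only [add_zero] at *
        by_contra hc
        simp only [ne_eq, not_true_eq_false, decide_false] at hc
        -- hc : ¬ (ξ k = false), so ξ k = true
        have hk : ξ k = true := by
          cases hξ : ξ k
          · exact absurd (by simp [hξ]) hc
          · rfl
        apply ha
        intro j
        rcases Nat.eq_zero_or_pos (j : ℕ) with hj0 | hjpos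
        · simpa [hj0] using hk
        · have := hb ⟨(j : ℕ) - 1, by omega⟩
          have e : k + 1 + ((j : ℕ) - 1) = k + (j : ℕ) := by omega
          rw [e] at this
          exact this
      · have := hb ⟨(i : ℕ) - 1, by omega⟩
        have e : k + 1 + ((i : ℕ) - 1) = k + (i : ℕ) := by omega
        rw [e] at this
        rw [this]
        simp
        omega
  have hQ : (∀ i : Fin ℓ, ξ (k + i) = decide ((i : ℕ) ≠ ℓ - 1)) ↔
      ((∀ j : Fin (ℓ - 1), ξ (k + j) = true) ∧
        ¬ (∀ j : Fin (ℓ - 1), ξ (k + 1 + j) = true)) := by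
    constructor
    · intro h
      constructor
      · intro j
        have := h ⟨(j : ℕ), by omega⟩
        simp only [decide_eq_true_eq] at this
        rw [this]
        simp
        omega
      · intro hb
        have hlast := h ⟨ℓ - 1, by omega⟩
        simp only [decide_eq_true_eq, ne_eq, not_true_eq_false, decide_false] at hlast
        have := hb ⟨ℓ - 2, by omega⟩
        have e : k + 1 + (ℓ - 2) = k + (ℓ - 1) := by omega
        rw [e] at this
        rw [this] at hlast
        simp at hlast
    · rintro ⟨ha, hb⟩ i
      rcases Nat.lt_or_ge (i : ℕ) (ℓ - 1) with hlt | hge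
      · have := ha ⟨(i : ℕ), hlt⟩
        rw [this]
        simp
        omega
      · have hi : (i : ℕ) = ℓ - 1 := by omega
        simp only [hi]
        simp only [ne_eq, not_true_eq_false, decide_false]
        by_contra hc
        have hk : ξ (k + (ℓ - 1)) = true := by
          cases hξ : ξ (k + (ℓ - 1))
          · exact absurd (by simp [hξ]) hc
          · rfl
        apply hb
        intro j
        rcases Nat.lt_or_ge (j : ℕ) (ℓ - 2) with hj | hj
        · have := ha ⟨(j : ℕ) + 1, by omega⟩
          have e : k + 1 + (j : ℕ) = k + ((j : ℕ) + 1) := by omega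
          rw [e]
          exact this
        · have hj2 : (j : ℕ) = ℓ - 2 := by omega
          have e : k + 1 + (j : ℕ) = k + (ℓ - 1) := by omega
          rw [e]
          exact hk
  simp only [hP, hQ]
  unfold uu
  by_cases ha : (∀ j : Fin (ℓ - 1), ξ (k + j) = true) <;>
    by_cases hb : (∀ j : Fin (ℓ - 1), ξ (k + 1 + j) = true) <;>
    simp [ha, hb]

lemma netScore_eq (ℓ : ℕ) (hℓ : 2 ≤ ℓ) (ξ : ℕ → Bool) (n : ℕ) :
    netScore ℓ ξ n = uu ℓ ξ (n + 1 - ℓ + 1) - uu ℓ ξ 1 := by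
  unfold netScore
  rw [← Finset.sum_sub_distrib]
  rw [Finset.sum_congr rfl (fun k _ => term_eq ℓ hℓ ξ k)]
  induction (n + 1 - ℓ) with
  | zero => simp
  | succ m ih =>
      rw [Finset.sum_Icc_succ_top (by omega : 1 ≤ m + 1), ih]
      ring

/-- For `A = H T^{ℓ−1}` and `B = T^{ℓ−1} H`, the net score satisfies
`Ŝ_n ∈ {−1, 0, 1}` deterministically for all `n`; and for `ℓ = 2` (so `A = HT`, `B = TH`),
`Ŝ_n = 1{ξ_n = T} − 1{ξ_1 = T}`. -/
theorem statement19 (ℓ : ℕ) (hℓ : 2 ≤ ℓ) (ξ : ℕ → Bool) :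
    (∀ n, netScore ℓ ξ n ∈ ({-1, 0, 1} : Set ℤ)) ∧
    (ℓ = 2 → ∀ n, 1 ≤ n → netScore ℓ ξ n =
      (if ξ n = true then (1 : ℤ) else 0) - (if ξ 1 = true then (1 : ℤ) else 0)) := by
  constructor
  · intro n
    rw [netScore_eq ℓ hℓ ξ n]
    rcases uu_mem ℓ ξ (n + 1 - ℓ + 1) with h1 | h1 <;>
      rcases uu_mem ℓ ξ 1 with h2 | h2 <;>
      simp [h1, h2, Set.mem_insert_iff]
  · rintro rfl n hn
    rw [netScore_eq 2 hℓ ξ n]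
    have e : n + 1 - 2 + 1 = n := by omega
    rw [e]
    have huu : ∀ k, uu 2 ξ k = if ξ k = true then (1 : ℤ) else 0 := by
      intro k
      unfold uu
      simp [Fin.forall_fin_one]
    rw [huu, huu]
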